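/- The affine map X ↦ A X + b with A = [[1−2p/n, p/n²], [(1−p)/n, 1−1/n]] and b = (pσ²/n², pσ²/n) has the unique fixed point (E x̄², E x²‾) = (σ²(p+1)/(p+2n−1), σ²(1+p(2n−1))/(p+2n−1)), for 0 < p ≤ 1 and n ≥ 2. -/

import Mathlib

open Matrix

/-- The affine map `X ↦ A X + b` of the fixed-size open gossip system has the unique fixed
point `(E x̄², E x²‾) = (σ²(p+1)/(p+2n−1), σ²(1+p(2n−1))/(p+2n−1))`. -/
theorem fixed_point_unique (n : ℕ) (hn : 2 ≤ n) (p σ2 : ℝ) (hp0 : 0 < p) (hp1 : p ≤ 1) :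
    ∀ X : Fin 2 → ℝ,
      X = (!![1 - 2 * p / n, p / (n : ℝ) ^ 2;
              (1 - p) / n, 1 - 1 / n]).mulVec X + ![p * σ2 / (n : ℝ) ^ 2, p * σ2 / n]
      ↔ X = ![σ2 * (p + 1) / (p + 2 * n - 1),
              σ2 * (1 + p * (2 * (n : ℝ) - 1)) / (p + 2 * n - 1)] := by
  have hn0 : (0:ℝ) < (n:ℝ) := by positivity
  have hn' : (n:ℝ) ≠ 0 := ne_of_gt hn0
  have hn2 : (2:ℝ) ≤ (n:ℝ) := by exact_mod_cast hn
  have hd : p + 2 * (n:ℝ) - 1 > 0 := by linarith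
  have hd' : p + 2 * (n:ℝ) - 1 ≠ 0 := ne_of_gt hd
  intro X
  constructor
  · intro h
    have h0 := congrFun h 0
    have h1 := congrFun h 1
    simp [mulVec, dotProduct, Fin.sum_univ_succ] at h0 h1
    -- derive x1 = (1-p)*x0 + p*σ2
    have e1 : X 1 = (1 - p) * X 0 + p * σ2 := by
      field_simp at h1
      nlinarith [h1]
    have e0 : (p + 2 * (n:ℝ) - 1) * X 0 = σ2 * (p + 1) := by
      have hn2' : (n:ℝ)^2 ≠ 0 := pow_ne_zero _ hn'
      field_simp at h0
      have k : p * (↑n:ℝ)^3 * (2*↑n*X 0 - X 1 - σ2) = 0 := by linear_combination (↑n:ℝ)^3 * h0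
      have h2 : 2*(↑n:ℝ)*X 0 = X 1 + σ2 := by
        rcases mul_eq_zero.1 k with hk | hk
        · exact absurd hk (by positivity)
        · linarith
      linear_combination h2 + e1
    funext i
    fin_cases i
    · show X 0 = σ2 * (p + 1) / (p + 2 * (n:ℝ) - 1)
      field_simp
      linarith [e0]
    · show X 1 = σ2 * (1 + p * (2 * (n:ℝ) - 1)) / (p + 2 * (n:ℝ) - 1)
      rw [e1]
      field_simp
      linear_combination (1 - p) * e0
  · intro h
    subst h
    funext i
    fin_cases i <;>
      simp [mulVec, dotProduct, Fin.sum_univ_succ] <;>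
      field_simp <;> ring
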